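/- arXiv:2410.00411 — 2 statements merged into one kernel-verified Lean document; each statement's English description precedes it below -/
import Mathlib

section
/- Let β > 1 and let λ ∈ ℂ with 1/β < |λ| ≤ 1. Then the function F_λ : [0,1] → ℂ, F_λ(x) = Σ_{n=1}^∞ a_n(β,x)/(βλ)^n, is left-continuous at every simple point x ∈ (0,1] if and only if Σ_{n=1}^∞ a_n(β,1)/(βλ)^n = 1 (i.e. φ_β(λ^{−1}) = 1; by the paper's Theorem 2.7 this means exactly that λ is an isolated eigenvalue of the Perron–Frobenius operator of τ_β). -/
open scoped BigOperators

/-- The beta-map `x ↦ βx - ⌊βx⌋`. -/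
noncomputable def tau (β x : ℝ) : ℝ := β * x - ⌊β * x⌋

/-- Greedy digit `a_n(β,x) = ⌊β·τ_β^{n-1}(x)⌋` (meaningful for `n ≥ 1`). -/
noncomputable def dig (β x : ℝ) (n : ℕ) : ℤ := ⌊β * (tau β)^[n - 1] x⌋

/-- `x` is a simple point for `β`: some `τ_β^{n-1}(x)` lies in `{1/β, …, ⌊β⌋/β}`. -/
def IsSimplePt (β x : ℝ) : Prop :=
  ∃ n : ℕ, 1 ≤ n ∧ ∃ k : ℕ, 1 ≤ k ∧ (k : ℤ) ≤ ⌊β⌋ ∧ (tau β)^[n - 1] x = (k : ℝ) / β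

/-- `L(x)`: the least `n ≥ 1` with `τ_β^{n-1}(x) ∈ {1/β, …, ⌊β⌋/β}`. -/
noncomputable def Lpt (β x : ℝ) : ℕ :=
  sInf {n : ℕ | 1 ≤ n ∧ ∃ k : ℕ, 1 ≤ k ∧ (k : ℤ) ≤ ⌊β⌋ ∧ (tau β)^[n - 1] x = (k : ℝ) / β}

/-- `β` is simple if `x = 1` is a simple point for `β`. -/
def IsSimpleBeta (β : ℝ) : Prop := IsSimplePt β 1

open Classical in
/-- Quasi-greedy digit `d_n(β,1)` (meaningful for `n ≥ 1`): if `β` is simple with `L = L(1)`,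
the periodic sequence repeating the block `(a_1, …, a_{L-1}, a_L - 1)`; otherwise `a_n(β,1)`. -/
noncomputable def qdig (β : ℝ) (n : ℕ) : ℤ :=
  if IsSimpleBeta β then
    (if (n - 1) % Lpt β 1 = Lpt β 1 - 1 then dig β 1 (Lpt β 1) - 1
     else dig β 1 ((n - 1) % Lpt β 1 + 1))
  else dig β 1 n

/-- `φ_β(z) = Σ_{n≥1} a_n(β,1) β^{-n} z^n`. -/
noncomputable def phi (β : ℝ) (z : ℂ) : ℂ :=
  ∑' n : ℕ, (dig β 1 (n + 1) : ℂ) * (z / (β : ℂ)) ^ (n + 1)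

/-- `φ̂_β(z) = Σ_{n≥1} d_n(β,1) β^{-n} z^n`. -/
noncomputable def phiHat (β : ℝ) (z : ℂ) : ℂ :=
  ∑' n : ℕ, (qdig β (n + 1) : ℂ) * (z / (β : ℂ)) ^ (n + 1)

/-- `ψ_β(z) = 1 + Σ_{n≥1} τ_β^n(1) β^{-n} z^n`. -/
noncomputable def psi (β : ℝ) (z : ℂ) : ℂ :=
  1 + ∑' n : ℕ, (((tau β)^[n + 1] 1 : ℝ) : ℂ) * (z / (β : ℂ)) ^ (n + 1)

/-- `F_λ(x) = Σ_{n≥1} a_n(β,x)/(βλ)^n`. -/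
noncomputable def Ffun (β : ℝ) (lam : ℂ) (x : ℝ) : ℂ :=
  ∑' n : ℕ, (dig β x (n + 1) : ℂ) / ((β : ℂ) * lam) ^ (n + 1)

section Part1
variable {β : ℝ}

lemma tau_eq_fract (β x : ℝ) : tau β x = Int.fract (β * x) := rfl

lemma orbit_nonneg (hβ : 1 < β) {x : ℝ} (hx : 0 ≤ x) (n : ℕ) : 0 ≤ (tau β)^[n] x := by
  cases n with
  | zero => simpa
  | succ n => rw [Function.iterate_succ_apply', tau_eq_fract]; exact Int.fract_nonneg _

lemma orbit_le_one (hβ : 1 < β) {x : ℝ} (hx : x ≤ 1) (n : ℕ) : (tau β)^[n] x ≤ 1 := by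
  cases n with
  | zero => simpa
  | succ n =>
    rw [Function.iterate_succ_apply', tau_eq_fract]
    exact le_of_lt (Int.fract_lt_one _)

lemma dig_nonneg (hβ : 1 < β) {x : ℝ} (hx : 0 ≤ x) (n : ℕ) : 0 ≤ dig β x n := by
  unfold dig
  exact Int.floor_nonneg.2 (mul_nonneg (by linarith) (orbit_nonneg hβ hx _))

lemma dig_le_floor (hβ : 1 < β) {x : ℝ} (hx0 : 0 ≤ x) (hx : x ≤ 1) (n : ℕ) :
    dig β x n ≤ ⌊β⌋ := by
  unfold dig
  apply Int.floor_le_floor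
  nlinarith [orbit_le_one hβ hx (n-1), orbit_nonneg hβ hx0 (n-1)]

lemma abs_dig_le (hβ : 1 < β) {x : ℝ} (hx0 : 0 ≤ x) (hx : x ≤ 1) (n : ℕ) :
    |(dig β x n : ℝ)| ≤ β := by
  rw [abs_le]
  have h1 := dig_nonneg hβ hx0 n
  have h2 := dig_le_floor hβ hx0 hx n
  have h3 : ((dig β x n : ℤ) : ℝ) ≤ (⌊β⌋ : ℝ) := by exact_mod_cast h2
  have h4 : (0:ℝ) ≤ ((dig β x n : ℤ) : ℝ) := by exact_mod_cast h1
  have := Int.floor_le β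
  constructor <;> linarith

lemma abs_qdig_le (hβ : 1 < β) (n : ℕ) : |(qdig β n : ℝ)| ≤ β := by
  unfold qdig
  split_ifs with h h2
  · have h1 := dig_nonneg hβ (by norm_num : (0:ℝ) ≤ 1) (Lpt β 1)
    have h2' := dig_le_floor hβ (by norm_num) (le_refl (1:ℝ)) (Lpt β 1)
    have h3 : ((dig β 1 (Lpt β 1) : ℤ) : ℝ) ≤ (⌊β⌋ : ℝ) := by exact_mod_cast h2'
    have h4 : (0:ℝ) ≤ ((dig β 1 (Lpt β 1) : ℤ) : ℝ) := by exact_mod_cast h1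
    have h5 := Int.floor_le β
    rw [abs_le]; push_cast
    constructor <;> linarith
  · exact abs_dig_le hβ (by norm_num) (le_refl 1) _
  · exact abs_dig_le hβ (by norm_num) (le_refl 1) _

end Part1
section Part2
variable {β : ℝ}

lemma step_floor (hβ : 1 < β) {t ε : ℝ} {q : ℤ} (h1 : 0 < β * t - q) (h2 : β * t - q ≤ 1)
    (hε : 0 < ε) (hεle : β * ε ≤ β * t - q) :
    ⌊β * (t - ε)⌋ = q ∧ tau β (t - ε) = (β * t - q) - β * ε := by
  have hb0 : (0:ℝ) < β := by linarith
  have hfloor : ⌊β * (t - ε)⌋ = q := by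
    rw [Int.floor_eq_iff]
    constructor <;> nlinarith
  refine ⟨hfloor, ?_⟩
  unfold tau
  rw [hfloor]; ring

/-- If the orbit of `x` hits `0` at time `r ≥ 1`, then `x` is a simple point
with witness `s ≤ r`. -/
lemma simple_of_orbit_zero (hβ : 1 < β) {x : ℝ} (hx0 : 0 < x) (hx1 : x ≤ 1) :
    ∀ r : ℕ, 1 ≤ r → (tau β)^[r] x = 0 →
    ∃ s, 1 ≤ s ∧ s ≤ r ∧ ∃ k : ℕ, 1 ≤ k ∧ (k : ℤ) ≤ ⌊β⌋ ∧ (tau β)^[s - 1] x = (k : ℝ) / β := by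
  intro r
  induction r using Nat.strong_induction_on with
  | _ r ih =>
    intro hr h0
    have hb0 : (0:ℝ) < β := by linarith
    obtain ⟨m, rfl⟩ : ∃ m, r = m + 1 := ⟨r - 1, by omega⟩
    set t := (tau β)^[m] x with ht
    have htau : tau β t = 0 := by
      rw [← Function.iterate_succ_apply' (tau β) m x]; exact h0
    by_cases htz : t = 0
    · -- recurse
      have hm1 : 1 ≤ m := by
        rcases Nat.eq_zero_or_pos m with h | h
        · exfalso; rw [h] at ht; simp at ht; rw [ht] at htz; linarith
        · exact h
      obtain ⟨s, hs1, hs2, hk⟩ := ih m (by omega) hm1 htz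
      exact ⟨s, hs1, by omega, hk⟩
    · have htpos : 0 < t := lt_of_le_of_ne (orbit_nonneg hβ hx0.le m) (Ne.symm htz)
      have htle : t ≤ 1 := orbit_le_one hβ hx1 m
      have heq : β * t = (⌊β * t⌋ : ℝ) := by
        have : β * t - ⌊β * t⌋ = 0 := htau
        linarith
      set q := ⌊β * t⌋ with hq
      have hq1 : 1 ≤ q := by
        have h' : (0:ℝ) < q := by rw [← heq]; positivity
        have h'' : (0:ℤ) < q := by exact_mod_cast h'
        omega
      have hqβ : q ≤ ⌊β⌋ := by
        rw [Int.le_floor]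
        rw [← heq]; nlinarith
      refine ⟨m + 1, by omega, le_refl _, q.toNat, ?_, ?_, ?_⟩
      · omega
      · rw [Int.toNat_of_nonneg (by omega)]; exact hqβ
      · have hcast : ((q.toNat : ℕ) : ℝ) = (q : ℝ) := by
          exact_mod_cast congrArg (Int.cast : ℤ → ℝ) (Int.toNat_of_nonneg (show (0:ℤ) ≤ q by omega))
        simp only [Nat.add_sub_cancel, ← ht]
        rw [eq_div_iff (ne_of_gt hb0), hcast, mul_comm]
        linarith [heq]

/-- Facts about `Lpt` for a simple point. -/
lemma Lpt_mem (hs : IsSimplePt β x) :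
    1 ≤ Lpt β x ∧ ∃ k : ℕ, 1 ≤ k ∧ (k : ℤ) ≤ ⌊β⌋ ∧ (tau β)^[Lpt β x - 1] x = (k : ℝ) / β := by
  have := Nat.sInf_mem (s := {n : ℕ | 1 ≤ n ∧ ∃ k : ℕ, 1 ≤ k ∧ (k : ℤ) ≤ ⌊β⌋ ∧ (tau β)^[n - 1] x = (k : ℝ) / β}) hs
  exact this

lemma Lpt_min {x : ℝ} {s : ℕ} (h1 : 1 ≤ s)
    (h2 : ∃ k : ℕ, 1 ≤ k ∧ (k : ℤ) ≤ ⌊β⌋ ∧ (tau β)^[s - 1] x = (k : ℝ) / β) :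
    Lpt β x ≤ s := Nat.sInf_le ⟨h1, h2⟩

/-- Positivity of the orbit before the hitting time. -/
lemma orbit_pos_of_le (hβ : 1 < β) {x : ℝ} (hx0 : 0 < x) (hx1 : x ≤ 1)
    (hs : IsSimplePt β x) {j : ℕ} (hj : j ≤ Lpt β x - 1) : 0 < (tau β)^[j] x := by
  rcases Nat.eq_zero_or_pos j with rfl | hjpos
  · simpa
  rcases lt_or_ge 0 ((tau β)^[j] x) with h | h
  · exact h
  exfalso
  have h0 : (tau β)^[j] x = 0 := le_antisymm h (orbit_nonneg hβ hx0.le j)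
  obtain ⟨s, hs1, hs2, hk⟩ := simple_of_orbit_zero hβ hx0 hx1 j hjpos h0
  have hL := Lpt_min (β := β) (x := x) hs1 hk
  have hL1 := (Lpt_mem hs).1
  omega

/-- The orbit of a simple point is eventually `0`. -/
lemma orbit_zero_at_L (hβ : 1 < β) {x : ℝ} (hs : IsSimplePt β x) :
    (tau β)^[Lpt β x] x = 0 := by
  obtain ⟨hL1, k, hk1, hk2, hk3⟩ := Lpt_mem hs
  have hb0 : (0:ℝ) < β := by linarith
  have : Lpt β x = (Lpt β x - 1) + 1 := by omega
  rw [this, Function.iterate_succ_apply', hk3, tau_eq_fract]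
  rw [mul_div_cancel₀ _ (ne_of_gt hb0)]
  exact_mod_cast Int.fract_intCast k

lemma orbit_zero_after_L (hβ : 1 < β) {x : ℝ} (hs : IsSimplePt β x) {n : ℕ}
    (hn : Lpt β x ≤ n) : (tau β)^[n] x = 0 := by
  obtain ⟨m, rfl⟩ : ∃ m, n = m + Lpt β x := ⟨n - Lpt β x, by omega⟩
  rw [Function.iterate_add_apply, orbit_zero_at_L hβ hs]
  induction m with
  | zero => simp
  | succ m ihm =>
    rw [Function.iterate_succ_apply', ihm (by omega), tau_eq_fract]
    norm_num

lemma dig_zero_after_L (hβ : 1 < β) {x : ℝ} (hs : IsSimplePt β x) {n : ℕ}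
    (hn : Lpt β x + 1 ≤ n) : dig β x n = 0 := by
  unfold dig
  rw [orbit_zero_after_L hβ hs (by omega)]
  simp

end Part2
/-- The quasi-greedy orbit of 1. -/
noncomputable def qorb (β : ℝ) : ℕ → ℝ
  | 0 => 1
  | n + 1 => β * qorb β n - qdig β (n + 1)

section Part3
variable {β : ℝ}

lemma qdig_of_simple (hs : IsSimpleBeta β) (n : ℕ) :
    qdig β n = if (n - 1) % Lpt β 1 = Lpt β 1 - 1 then dig β 1 (Lpt β 1) - 1
      else dig β 1 ((n - 1) % Lpt β 1 + 1) := by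
  unfold qdig; rw [if_pos hs]

lemma qdig_of_not_simple (hs : ¬ IsSimpleBeta β) (n : ℕ) : qdig β n = dig β 1 n := by
  unfold qdig; rw [if_neg hs]

lemma dig_L_of_simple (hβ : 1 < β) (hs : IsSimpleBeta β)
    {k : ℕ} (hk3 : (tau β)^[Lpt β 1 - 1] 1 = (k : ℝ) / β) :
    dig β 1 (Lpt β 1) = (k : ℤ) := by
  unfold dig
  rw [hk3, mul_div_cancel₀ _ (by positivity : (β:ℝ) ≠ 0)]
  exact_mod_cast Int.floor_natCast k

/-- Formula for `qorb` in the simple case. -/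
lemma qorb_of_simple (hβ : 1 < β) (hs : IsSimpleBeta β) (n : ℕ) :
    qorb β n = (tau β)^[n % Lpt β 1] 1 := by
  obtain ⟨hL1, k, hk1, hk2, hk3⟩ := Lpt_mem hs
  set L := Lpt β 1 with hL
  have hLpos : 0 < L := hL1
  induction n with
  | zero => simp [qorb]
  | succ n ihn =>
    have hmod : n % L < L := Nat.mod_lt n hLpos
    show β * qorb β n - qdig β (n + 1) = _
    rw [ihn, qdig_of_simple hs]
    simp only [Nat.add_sub_cancel]
    by_cases hcase : n % L = L - 1
    · rw [if_pos hcase, hcase, hk3, dig_L_of_simple hβ hs hk3]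
      have h2 : (n + 1) % L = 0 := by
        have hdm := Nat.div_add_mod n L
        have : n + 1 = L * (n / L + 1) := by rw [Nat.mul_add, Nat.mul_one]; omega
        rw [this, Nat.mul_mod_right]
      rw [h2]
      push_cast
      field_simp
      rw [Function.iterate_zero_apply]; ring
    · rw [if_neg hcase]
      have h2 : (n + 1) % L = n % L + 1 := by
        have hdm := Nat.div_add_mod n L
        have hlt : n % L + 1 < L := by omega
        have : n + 1 = n % L + 1 + L * (n / L) := by omega
        rw [this, Nat.add_mul_mod_self_left, Nat.mod_eq_of_lt hlt]
      rw [h2, Function.iterate_succ_apply']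
      unfold dig tau
      simp only [Nat.add_sub_cancel]
      rfl

/-- Formula for `qorb` in the non-simple case. -/
lemma qorb_of_not_simple (hs : ¬ IsSimpleBeta β) (n : ℕ) :
    qorb β n = (tau β)^[n] 1 := by
  induction n with
  | zero => simp [qorb]
  | succ n ihn =>
    show β * qorb β n - qdig β (n + 1) = _
    rw [ihn, qdig_of_not_simple hs, Function.iterate_succ_apply']
    unfold dig tau
    simp only [Nat.add_sub_cancel]

lemma qorb_pos (hβ : 1 < β) (n : ℕ) : 0 < qorb β n := by
  by_cases hs : IsSimpleBeta β
  · rw [qorb_of_simple hβ hs]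
    have hL1 := (Lpt_mem hs).1
    exact orbit_pos_of_le hβ (by norm_num) (le_refl 1) hs
      (Nat.le_sub_one_of_lt (Nat.mod_lt _ hL1))
  · rw [qorb_of_not_simple hs]
    rcases Nat.eq_zero_or_pos n with rfl | hn
    · simp
    rcases lt_or_ge 0 ((tau β)^[n] 1) with h | h
    · exact h
    exfalso
    have h0 : (tau β)^[n] 1 = 0 := le_antisymm h (orbit_nonneg hβ (by norm_num) n)
    obtain ⟨s, hs1, hs2, hk⟩ := simple_of_orbit_zero hβ (by norm_num) (le_refl 1) n hn h0
    exact hs ⟨s, hs1, hk⟩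

lemma qorb_le_one (hβ : 1 < β) (n : ℕ) : qorb β n ≤ 1 := by
  by_cases hs : IsSimpleBeta β
  · rw [qorb_of_simple hβ hs]; exact orbit_le_one hβ (le_refl 1) _
  · rw [qorb_of_not_simple hs]; exact orbit_le_one hβ (le_refl 1) _

end Part3
section Part4
variable {β : ℝ}

lemma approx_one_orbit (hβ : 1 < β) (N : ℕ) :
    ∃ δ > 0, ∀ ε : ℝ, 0 < ε → ε < δ →
      ∀ j ≤ N, (tau β)^[j] (1 - ε) = qorb β j - β ^ j * ε := by
  have hb0 : (0:ℝ) < β := by linarith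
  induction N with
  | zero =>
    refine ⟨1, one_pos, fun ε h1 h2 j hj => ?_⟩
    interval_cases j
    simp [qorb]
  | succ N ih =>
    obtain ⟨δ, hδ, H⟩ := ih
    refine ⟨min δ (qorb β (N+1) / β ^ (N+1)),
      lt_min hδ (div_pos (qorb_pos hβ _) (by positivity)), fun ε h1 h2 j hj => ?_⟩
    have h2δ : ε < δ := lt_of_lt_of_le h2 (min_le_left _ _)
    rcases Nat.lt_succ_iff_lt_or_eq.mp (Nat.lt_succ_of_le hj) with hj' | rfl
    · exact H ε h1 h2δ j (by omega)
    · have horb := H ε h1 h2δ N (le_refl N)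
      have hεle : β * (β ^ N * ε) ≤ β * qorb β N - (qdig β (N+1) : ℝ) := by
        have h2' : ε < qorb β (N+1) / β ^ (N+1) := lt_of_lt_of_le h2 (min_le_right _ _)
        have : β ^ (N+1) * ε < qorb β (N+1) := by
          rw [← lt_div_iff₀' (by positivity)]; exact h2'
        have hq : qorb β (N+1) = β * qorb β N - (qdig β (N+1) : ℝ) := rfl
        rw [hq] at this
        calc β * (β ^ N * ε) = β ^ (N+1) * ε := by ring
        _ ≤ _ := this.le
      have hstep := step_floor hβ (t := qorb β N) (q := qdig β (N+1)) (ε := β ^ N * ε)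
        (by have := qorb_pos hβ (N+1); exact this.trans_le (le_of_eq rfl))
        (by have := qorb_le_one hβ (N+1); exact le_of_eq_of_le rfl this)
        (by positivity) hεle
      rw [Function.iterate_succ_apply', horb, hstep.2]
      have hq : qorb β (N+1) = β * qorb β N - (qdig β (N+1) : ℝ) := rfl
      rw [hq]; ring

lemma approx_one_dig (hβ : 1 < β) (N : ℕ) :
    ∃ δ > 0, ∀ ε : ℝ, 0 < ε → ε < δ →
      ∀ j, 1 ≤ j → j ≤ N → dig β (1 - ε) j = qdig β j := by
  have hb0 : (0:ℝ) < β := by linarith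
  obtain ⟨δ, hδ, H⟩ := approx_one_orbit hβ N
  refine ⟨min δ 1, lt_min hδ one_pos, fun ε h1 h2 j hj1 hjN => ?_⟩
  have h2δ : ε < δ := lt_of_lt_of_le h2 (min_le_left _ _)
  have h21 : ε < 1 := lt_of_lt_of_le h2 (min_le_right _ _)
  obtain ⟨m, rfl⟩ : ∃ m, j = m + 1 := ⟨j - 1, by omega⟩
  have horb := H ε h1 h2δ m (by omega)
  have horb' := H ε h1 h2δ (m+1) hjN
  have hnn : 0 ≤ (tau β)^[m+1] (1 - ε) := orbit_nonneg hβ (by linarith) (m+1)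
  rw [horb'] at hnn
  have hεle : β * (β ^ m * ε) ≤ β * qorb β m - (qdig β (m+1) : ℝ) := by
    have hq : qorb β (m+1) = β * qorb β m - (qdig β (m+1) : ℝ) := rfl
    calc β * (β ^ m * ε) = β ^ (m+1) * ε := by ring
    _ ≤ qorb β (m+1) := by linarith
    _ = _ := hq
  have hstep := step_floor hβ (t := qorb β m) (q := qdig β (m+1)) (ε := β ^ m * ε)
    (qorb_pos hβ (m+1)) (qorb_le_one hβ (m+1)) (by positivity) hεle
  unfold dig
  simp only [Nat.add_sub_cancel]
  rw [horb, hstep.1]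

end Part4
/-- The limiting digit sequence as `y → x⁻` for a simple point `x`. -/
noncomputable def sdig (β x : ℝ) (n : ℕ) : ℤ :=
  if n < Lpt β x then dig β x n
  else if n = Lpt β x then dig β x (Lpt β x) - 1
  else qdig β (n - Lpt β x)

section Part5
variable {β : ℝ}

lemma tau_apply (β t : ℝ) : tau β t = β * t - ⌊β * t⌋ := rfl

lemma dig_succ (β x : ℝ) (m : ℕ) : dig β x (m + 1) = ⌊β * (tau β)^[m] x⌋ := by
  simp [dig]

lemma iterate_succ_eq (β x : ℝ) (m : ℕ) :
    (tau β)^[m + 1] x = β * (tau β)^[m] x - (dig β x (m + 1) : ℝ) := by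
  rw [Function.iterate_succ_apply', dig_succ]; rfl

lemma dig_L_eq (hβ : 1 < β) {x : ℝ} {k : ℕ} {L : ℕ}
    (hk3 : (tau β)^[L - 1] x = (k : ℝ) / β) : dig β x L = (k : ℤ) := by
  unfold dig
  rw [hk3, mul_div_cancel₀ _ (by positivity : (β:ℝ) ≠ 0)]
  exact_mod_cast Int.floor_natCast k

lemma near_x_orbit (hβ : 1 < β) {x : ℝ} (hx0 : 0 < x) (hx1 : x ≤ 1)
    (hs : IsSimplePt β x) :
    ∃ δ > 0, ∀ ε : ℝ, 0 < ε → ε < δ →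
      ∀ j ≤ Lpt β x - 1, (tau β)^[j] (x - ε) = (tau β)^[j] x - β ^ j * ε := by
  have hb0 : (0:ℝ) < β := by linarith
  suffices h : ∀ M, M ≤ Lpt β x - 1 → ∃ δ > 0, ∀ ε : ℝ, 0 < ε → ε < δ →
      ∀ j ≤ M, (tau β)^[j] (x - ε) = (tau β)^[j] x - β ^ j * ε by
    exact h (Lpt β x - 1) (le_refl _)
  intro M
  induction M with
  | zero =>
    intro _
    refine ⟨1, one_pos, fun ε h1 h2 j hj => ?_⟩
    interval_cases j
    simp
  | succ M ih =>
    intro hM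
    obtain ⟨δ, hδ, H⟩ := ih (by omega)
    have hpos : 0 < (tau β)^[M+1] x := orbit_pos_of_le hβ hx0 hx1 hs hM
    refine ⟨min δ ((tau β)^[M+1] x / β ^ (M+1)),
      lt_min hδ (div_pos hpos (by positivity)), fun ε h1 h2 j hj => ?_⟩
    have h2δ : ε < δ := lt_of_lt_of_le h2 (min_le_left _ _)
    rcases Nat.lt_succ_iff_lt_or_eq.mp (Nat.lt_succ_of_le hj) with hj' | rfl
    · exact H ε h1 h2δ j (by omega)
    · have horb := H ε h1 h2δ M (le_refl M)
      have hiter := iterate_succ_eq β x M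
      have hεle : β * (β ^ M * ε) ≤ β * (tau β)^[M] x - (dig β x (M+1) : ℝ) := by
        have h2' : ε < (tau β)^[M+1] x / β ^ (M+1) := lt_of_lt_of_le h2 (min_le_right _ _)
        have h3 : β ^ (M+1) * ε < (tau β)^[M+1] x := by
          rw [← lt_div_iff₀' (by positivity)]; exact h2'
        rw [hiter] at h3
        calc β * (β ^ M * ε) = β ^ (M+1) * ε := by ring
        _ ≤ _ := h3.le
      have hstep := step_floor hβ (t := (tau β)^[M] x) (q := dig β x (M+1)) (ε := β ^ M * ε)
        (by rw [← hiter]; exact hpos)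
        (by rw [← hiter]; exact orbit_le_one hβ hx1 (M+1))
        (by positivity) hεle
      rw [Function.iterate_succ_apply', horb, hstep.2, ← hiter,
        Function.iterate_succ_apply']
      ring

lemma near_x_digits (hβ : 1 < β) {x : ℝ} (hx0 : 0 < x) (hx1 : x ≤ 1)
    (hs : IsSimplePt β x) (N : ℕ) :
    ∃ δ > 0, ∀ y : ℝ, 0 ≤ y → x - δ < y → y < x →
      ∀ n, 1 ≤ n → n ≤ N → dig β y n = sdig β x n := by
  have hb0 : (0:ℝ) < β := by linarith
  set L := Lpt β x with hLdef
  obtain ⟨hL1, k, hk1, hk2, hk3⟩ := Lpt_mem hs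
  obtain ⟨j, hLj⟩ : ∃ j, L = j + 1 := ⟨L - 1, by omega⟩
  have hLj' : L - 1 = j := by omega
  rw [hLdef.symm, hLj'] at hk3
  obtain ⟨δ₁, hδ₁, H₁⟩ := near_x_orbit hβ hx0 hx1 hs
  rw [hLdef.symm, hLj'] at H₁
  obtain ⟨δ₂, hδ₂, H₂⟩ := approx_one_dig hβ N
  refine ⟨min (min δ₁ (1 / β ^ L)) (δ₂ / β ^ L),
    lt_min (lt_min hδ₁ (by positivity)) (by positivity), fun y hy0 hyδ hyx n hn1 hnN => ?_⟩
  set ε := x - y with hε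
  have hε0 : 0 < ε := by simp only [hε]; linarith
  have hεδ₁ : ε < δ₁ := by
    have := lt_of_lt_of_le (show x - y < _ by linarith [hyδ])
      ((min_le_left _ _).trans (min_le_left _ _))
    simpa [hε] using this
  have hεL : β ^ L * ε ≤ 1 := by
    have := lt_of_lt_of_le (show x - y < _ by linarith [hyδ])
      ((min_le_left _ _).trans (min_le_right _ _))
    have h2 : ε < 1 / β ^ L := by simpa [hε] using this
    have := (lt_div_iff₀ (by positivity : (0:ℝ) < β ^ L)).mp h2
    linarith
  have hεδ₂ : β ^ L * ε < δ₂ := by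
    have := lt_of_lt_of_le (show x - y < _ by linarith [hyδ]) (min_le_right _ _)
    have h2 : ε < δ₂ / β ^ L := by simpa [hε] using this
    calc β ^ L * ε < β ^ L * (δ₂ / β ^ L) := mul_lt_mul_of_pos_left h2 (by positivity)
    _ = δ₂ := by field_simp
  have hyx' : y = x - ε := by simp [hε]
  -- key floor computation at step L
  have hfloorL : ⌊β * ((tau β)^[j] (x - ε))⌋ = (k:ℤ) - 1 := by
    rw [H₁ ε hε0 hεδ₁ j (by omega), hk3]
    have harg : β * ((k:ℝ) / β - β ^ j * ε) = (k:ℝ) - β ^ (j+1) * ε := by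
      field_simp; ring
    rw [harg, Int.floor_eq_iff]
    have hβL : β ^ (j+1) * ε ≤ 1 := by rw [← hLj]; exact hεL
    have hβL0 : 0 < β ^ (j+1) * ε := by positivity
    push_cast
    constructor <;> linarith
  have horbL : (tau β)^[L] (x - ε) = 1 - β ^ L * ε := by
    rw [hLj, Function.iterate_succ_apply', tau_apply, hfloorL,
      H₁ ε hε0 hεδ₁ j (by omega), hk3]
    push_cast
    field_simp
    ring
  rcases lt_trichotomy n L with hnL | rfl | hnL
  · -- n < L
    have hsd : sdig β x n = dig β x n := by unfold sdig; rw [if_pos hnL]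
    rw [hsd, hyx']
    obtain ⟨m, rfl⟩ : ∃ m, n = m + 1 := ⟨n - 1, by omega⟩
    have horb := H₁ ε hε0 hεδ₁ m (by omega)
    have horb' := H₁ ε hε0 hεδ₁ (m+1) (by omega)
    have hnn : 0 ≤ (tau β)^[m+1] (x - ε) := orbit_nonneg hβ (by linarith) (m+1)
    rw [horb'] at hnn
    have hiter := iterate_succ_eq β x m
    have hεle : β * (β ^ m * ε) ≤ β * (tau β)^[m] x - (dig β x (m+1) : ℝ) := by
      rw [← hiter]
      calc β * (β ^ m * ε) = β ^ (m+1) * ε := by ring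
      _ ≤ _ := by linarith
    have hstep := step_floor hβ (t := (tau β)^[m] x) (q := dig β x (m+1)) (ε := β ^ m * ε)
      (by rw [← hiter]; exact orbit_pos_of_le hβ hx0 hx1 hs (by omega))
      (by rw [← hiter]; exact orbit_le_one hβ hx1 (m+1))
      (by positivity) hεle
    rw [dig_succ, horb, hstep.1]
  · -- n = L
    have hsd : sdig β x L = dig β x L - 1 := by
      unfold sdig; rw [if_neg (lt_irrefl L), if_pos rfl]
    rw [hsd, hyx', dig_L_eq hβ (show (tau β)^[L-1] x = (k:ℝ)/β by rw [hLj']; exact hk3)]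
    rw [hLj, dig_succ]
    exact hfloorL
  · -- n > L
    have hsd : sdig β x n = qdig β (n - L) := by
      unfold sdig; rw [if_neg (by omega), if_neg (by omega)]
    rw [hsd, hyx']
    obtain ⟨m, hm, hm1⟩ : ∃ m, n = L + m ∧ 1 ≤ m := ⟨n - L, by omega, by omega⟩
    subst hm
    have hdig : dig β (x - ε) (L + m) = dig β (1 - β ^ L * ε) m := by
      obtain ⟨p, rfl⟩ : ∃ p, m = p + 1 := ⟨m - 1, by omega⟩
      have h1 : L + (p + 1) = (p + L) + 1 := by omega
      rw [h1, dig_succ, dig_succ, Function.iterate_add_apply, horbL]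
    rw [hdig, H₂ (β ^ L * ε) (by positivity) hεδ₂ m hm1 (by omega)]
    congr 1
    omega
end Part5
section Part6

lemma norm_int_complex (c : ℤ) : ‖(c : ℂ)‖ = |(c : ℝ)| := by
  have h : ((c : ℝ) : ℂ) = (c : ℂ) := by norm_cast
  rw [← h, Complex.norm_real, Real.norm_eq_abs]

lemma summable_digs {w : ℂ} (hw : ‖w‖ < 1) {B : ℝ} (c : ℕ → ℤ)
    (hc : ∀ n, |(c n : ℝ)| ≤ B) :
    Summable (fun n : ℕ => (c (n+1) : ℂ) * w ^ (n+1)) := by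
  apply Summable.of_norm
  apply Summable.of_nonneg_of_le (fun n => norm_nonneg _) (fun n => ?_)
    ((summable_geometric_of_lt_one (norm_nonneg w) hw).mul_left (B * ‖w‖))
  rw [norm_mul, norm_pow, norm_int_complex]
  calc |(c (n+1) : ℝ)| * ‖w‖ ^ (n+1) ≤ B * ‖w‖ ^ (n+1) := by
        apply mul_le_mul_of_nonneg_right (hc _) (by positivity)
  _ = B * ‖w‖ * ‖w‖ ^ n := by ring

lemma norm_tsum_sub_le {w : ℂ} (hw : ‖w‖ < 1) {B : ℝ} (hB : 0 ≤ B) (c d : ℕ → ℤ)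
    (hc : ∀ n, |(c n : ℝ)| ≤ B) (hd : ∀ n, |(d n : ℝ)| ≤ B) (N : ℕ)
    (hagree : ∀ n, 1 ≤ n → n ≤ N → c n = d n) :
    ‖(∑' n : ℕ, (c (n+1) : ℂ) * w ^ (n+1)) - ∑' n : ℕ, (d (n+1) : ℂ) * w ^ (n+1)‖
      ≤ 2 * B * ‖w‖ ^ N / (1 - ‖w‖) := by
  have hw0 : 0 ≤ ‖w‖ := norm_nonneg w
  have hsc := summable_digs hw c hc
  have hsd := summable_digs hw d hd
  set f : ℕ → ℂ := fun n => (c (n+1) : ℂ) * w ^ (n+1) - (d (n+1) : ℂ) * w ^ (n+1) with hf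
  have hnorm_le : ∀ n, ‖f n‖ ≤ 2 * B * ‖w‖ ^ (n+1) := by
    intro n
    calc ‖f n‖ = ‖((c (n+1) : ℂ) - (d (n+1) : ℂ)) * w ^ (n+1)‖ := by rw [hf]; ring_nf
    _ = ‖(c (n+1) : ℂ) - (d (n+1) : ℂ)‖ * ‖w‖ ^ (n+1) := by rw [norm_mul, norm_pow]
    _ ≤ (‖(c (n+1) : ℂ)‖ + ‖(d (n+1) : ℂ)‖) * ‖w‖ ^ (n+1) := by
        apply mul_le_mul_of_nonneg_right (norm_sub_le _ _) (by positivity)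
    _ ≤ (B + B) * ‖w‖ ^ (n+1) := by
        apply mul_le_mul_of_nonneg_right _ (by positivity)
        rw [norm_int_complex, norm_int_complex]
        exact add_le_add (hc _) (hd _)
    _ = 2 * B * ‖w‖ ^ (n+1) := by ring
  have hsn : Summable (fun n => ‖f n‖) := by
    apply Summable.of_nonneg_of_le (fun n => norm_nonneg _) hnorm_le
    have : Summable (fun n : ℕ => (2 * B * ‖w‖) * ‖w‖ ^ n) :=
      (summable_geometric_of_lt_one hw0 hw).mul_left _
    refine this.congr (fun n => by ring)
  rw [← Summable.tsum_sub hsc hsd]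
  refine le_trans (norm_tsum_le_tsum_norm hsn) ?_
  rw [← Summable.sum_add_tsum_nat_add N hsn]
  have hzero : ∀ n ∈ Finset.range N, ‖f n‖ = 0 := by
    intro n hn
    have hn' : n < N := Finset.mem_range.mp hn
    have : c (n+1) = d (n+1) := hagree (n+1) (by omega) (by omega)
    simp [hf, this]
  rw [Finset.sum_congr rfl hzero, Finset.sum_const, smul_zero, zero_add]
  have hle : ∀ n : ℕ, ‖f (n + N)‖ ≤ (2 * B * ‖w‖ ^ N) * ‖w‖ ^ n := by
    intro n
    refine le_trans (hnorm_le (n + N)) ?_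
    have h1 : ‖w‖ ^ (n + N + 1) ≤ ‖w‖ ^ (n + N) := pow_le_pow_of_le_one hw0 hw.le (by omega)
    calc 2 * B * ‖w‖ ^ (n + N + 1) ≤ 2 * B * ‖w‖ ^ (n + N) := by
          apply mul_le_mul_of_nonneg_left h1 (by positivity)
    _ = (2 * B * ‖w‖ ^ N) * ‖w‖ ^ n := by rw [pow_add]; ring
  calc ∑' n : ℕ, ‖f (n + N)‖ ≤ ∑' n : ℕ, (2 * B * ‖w‖ ^ N) * ‖w‖ ^ n := by
        refine Summable.tsum_le_tsum hle ((summable_nat_add_iff N).mpr hsn) ?_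
        exact (summable_geometric_of_lt_one hw0 hw).mul_left _
  _ = (2 * B * ‖w‖ ^ N) * (1 - ‖w‖)⁻¹ := by
        rw [tsum_mul_left, tsum_geometric_of_lt_one hw0 hw]
  _ = 2 * B * ‖w‖ ^ N / (1 - ‖w‖) := by rw [div_eq_mul_inv]

/-- Main convergence criterion. -/
lemma tendsto_tsum_digits {w : ℂ} (hw : ‖w‖ < 1) {B : ℝ} (hB : 0 < B)
    (c : ℝ → ℕ → ℤ) (d : ℕ → ℤ) (x : ℝ)
    (hbc : ∀ y ∈ Set.Ico (0:ℝ) x, ∀ n, |(c y n : ℝ)| ≤ B)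
    (hbd : ∀ n, |(d n : ℝ)| ≤ B)
    (hag : ∀ N : ℕ, ∃ δ > 0, ∀ y ∈ Set.Ico (0:ℝ) x, x - δ < y →
      ∀ n, 1 ≤ n → n ≤ N → c y n = d n) :
    Filter.Tendsto (fun y => ∑' n : ℕ, (c y (n+1) : ℂ) * w ^ (n+1))
      (nhdsWithin x (Set.Ico 0 x)) (nhds (∑' n : ℕ, (d (n+1) : ℂ) * w ^ (n+1))) := by
  have hw0 : 0 ≤ ‖w‖ := norm_nonneg w
  rw [Metric.tendsto_nhdsWithin_nhds]
  intro ε hε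
  -- choose N with 2B‖w‖^N/(1-‖w‖) < ε
  have htend : Filter.Tendsto (fun N : ℕ => 2 * B * ‖w‖ ^ N / (1 - ‖w‖))
      Filter.atTop (nhds 0) := by
    have h0 : Filter.Tendsto (fun N : ℕ => ‖w‖ ^ N) Filter.atTop (nhds 0) :=
      tendsto_pow_atTop_nhds_zero_of_lt_one hw0 hw
    have := (h0.const_mul (2 * B)).div_const (1 - ‖w‖)
    simpa using this
  obtain ⟨N, hN⟩ := (htend.eventually (gt_mem_nhds hε)).exists
  obtain ⟨δ, hδ, H⟩ := hag N
  refine ⟨δ, hδ, fun y hy hdist => ?_⟩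
  have hyx : y < x := hy.2
  have hxy : x - δ < y := by
    rw [Real.dist_eq, abs_of_neg (by linarith)] at hdist
    linarith
  have := H y hy hxy
  rw [dist_eq_norm]
  calc ‖_ - _‖ ≤ 2 * B * ‖w‖ ^ N / (1 - ‖w‖) :=
        norm_tsum_sub_le hw hB.le _ _ (hbc y hy) hbd N this
  _ < ε := hN

end Part6
section Part7
variable {β : ℝ}

lemma abs_sdig_le (hβ : 1 < β) {x : ℝ} (hx0 : 0 ≤ x) (hx1 : x ≤ 1) (n : ℕ) :
    |(sdig β x n : ℝ)| ≤ β + 1 := by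
  unfold sdig
  split_ifs with h h2
  · exact (abs_dig_le hβ hx0 hx1 n).trans (by linarith)
  · push_cast
    calc |(dig β x (Lpt β x) : ℝ) - 1| ≤ |(dig β x (Lpt β x) : ℝ)| + 1 := by
          exact (abs_sub _ _).trans (by simp)
    _ ≤ β + 1 := by linarith [abs_dig_le hβ hx0 hx1 (Lpt β x)]
  · exact (abs_qdig_le hβ _).trans (by linarith)

lemma abs_dig_le' (hβ : 1 < β) {x : ℝ} (hx0 : 0 ≤ x) (hx1 : x ≤ 1) (n : ℕ) :
    |(dig β x n : ℝ)| ≤ β + 1 := (abs_dig_le hβ hx0 hx1 n).trans (by linarith)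

lemma abs_qdig_le' (hβ : 1 < β) (n : ℕ) : |(qdig β n : ℝ)| ≤ β + 1 :=
  (abs_qdig_le hβ n).trans (by linarith)

/-- `F` at a simple point, as a finite sum. -/
lemma tsum_dig_eq_sum {w : ℂ} (hβ : 1 < β) {x : ℝ} (hs : IsSimplePt β x) :
    ∑' n : ℕ, (dig β x (n+1) : ℂ) * w ^ (n+1)
      = ∑ n ∈ Finset.range (Lpt β x), (dig β x (n+1) : ℂ) * w ^ (n+1) := by
  apply tsum_eq_sum
  intro n hn
  have : Lpt β x ≤ n := by simpa using hn
  rw [dig_zero_after_L hβ hs (by omega)]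
  simp

/-- The value of the left limit series. -/
lemma tsum_sdig_eq {w : ℂ} (hw : ‖w‖ < 1) (hβ : 1 < β) {x : ℝ}
    (hx0 : 0 ≤ x) (hx1 : x ≤ 1) (hs : IsSimplePt β x) :
    ∑' n : ℕ, (sdig β x (n+1) : ℂ) * w ^ (n+1)
      = (∑' n : ℕ, (dig β x (n+1) : ℂ) * w ^ (n+1)) - w ^ (Lpt β x)
        + w ^ (Lpt β x) * ∑' n : ℕ, (qdig β (n+1) : ℂ) * w ^ (n+1) := by
  set L := Lpt β x with hL
  have hL1 : 1 ≤ L := (Lpt_mem hs).1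
  have hsum : Summable (fun n : ℕ => (sdig β x (n+1) : ℂ) * w ^ (n+1)) :=
    summable_digs hw _ (abs_sdig_le hβ hx0 hx1)
  rw [← Summable.sum_add_tsum_nat_add L hsum]
  have htail : ∑' n : ℕ, (sdig β x ((n + L) + 1) : ℂ) * w ^ ((n + L) + 1)
      = w ^ L * ∑' n : ℕ, (qdig β (n+1) : ℂ) * w ^ (n+1) := by
    rw [← tsum_mul_left]
    apply tsum_congr
    intro n
    have h1 : sdig β x (n + L + 1) = qdig β (n + 1) := by
      unfold sdig
      rw [if_neg (by omega), if_neg (by omega)]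
      congr 1
      omega
    rw [h1]
    ring
  have hhead : ∑ n ∈ Finset.range L, (sdig β x (n+1) : ℂ) * w ^ (n+1)
      = (∑ n ∈ Finset.range L, (dig β x (n+1) : ℂ) * w ^ (n+1)) - w ^ L := by
    have key : ∑ n ∈ Finset.range L,
        ((sdig β x (n+1) : ℂ) * w ^ (n+1) - (dig β x (n+1) : ℂ) * w ^ (n+1)) = -w ^ L := by
      rw [Finset.sum_eq_single (L - 1)]
      · have h1 : sdig β x ((L-1)+1) = dig β x ((L-1)+1) - 1 := by
          unfold sdig
          rw [if_neg (by omega), if_pos (by omega)]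
          congr 2
          omega
        rw [h1]
        push_cast
        have h2 : L - 1 + 1 = L := by omega
        rw [h2]
        ring
      · intro n hn hne
        have hn' : n < L := Finset.mem_range.mp hn
        have h1 : sdig β x (n+1) = dig β x (n+1) := by
          unfold sdig
          rw [if_pos (by omega)]
        rw [h1]; ring
      · intro h
        exact absurd (Finset.mem_range.mpr (by omega)) h
    have := Finset.sum_sub_distrib (s := Finset.range L)
      (f := fun n => (sdig β x (n+1) : ℂ) * w ^ (n+1))
      (g := fun n => (dig β x (n+1) : ℂ) * w ^ (n+1))
    rw [this] at key
    linear_combination key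
  rw [htail, hhead, tsum_dig_eq_sum hβ hs]

/-- The quasi-greedy sum is 1 iff the greedy sum is 1. -/
lemma qsum_eq_one_iff {w : ℂ} (hw : ‖w‖ < 1) (hβ : 1 < β) :
    (∑' n : ℕ, (qdig β (n+1) : ℂ) * w ^ (n+1)) = 1
      ↔ (∑' n : ℕ, (dig β 1 (n+1) : ℂ) * w ^ (n+1)) = 1 := by
  by_cases hs : IsSimpleBeta β
  · set L := Lpt β 1 with hL
    have hL1 : 1 ≤ L := (Lpt_mem hs).1
    have hsum : Summable (fun n : ℕ => (qdig β (n+1) : ℂ) * w ^ (n+1)) :=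
      summable_digs hw _ (abs_qdig_le' hβ)
    set Q := ∑' n : ℕ, (qdig β (n+1) : ℂ) * w ^ (n+1) with hQ
    set P := ∑' n : ℕ, (dig β 1 (n+1) : ℂ) * w ^ (n+1) with hP
    have hper : ∀ n : ℕ, qdig β (n + L + 1) = qdig β (n + 1) := by
      intro n
      rw [qdig_of_simple hs, qdig_of_simple hs]
      have h1 : (n + L + 1 - 1) % L = (n + 1 - 1) % L := by
        simp only [Nat.add_sub_cancel]
        exact Nat.add_mod_right n L
      rw [h1]
    have hsplit : Q = (∑ n ∈ Finset.range L, (qdig β (n+1) : ℂ) * w ^ (n+1)) + w ^ L * Q := by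
      conv_lhs => rw [hQ, ← Summable.sum_add_tsum_nat_add L hsum]
      congr 1
      rw [← tsum_mul_left]
      apply tsum_congr
      intro n
      rw [hper n]
      ring
    have hhead : ∑ n ∈ Finset.range L, (qdig β (n+1) : ℂ) * w ^ (n+1) = P - w ^ L := by
      obtain ⟨_, k, hk1, hk2, hk3⟩ := Lpt_mem hs
      have key : ∑ n ∈ Finset.range L,
          ((qdig β (n+1) : ℂ) * w ^ (n+1) - (dig β 1 (n+1) : ℂ) * w ^ (n+1)) = -w ^ L := by
        rw [Finset.sum_eq_single (L - 1)]
        · have h1 : qdig β ((L-1)+1) = dig β 1 ((L-1)+1) - 1 := by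
            rw [qdig_of_simple hs]
            simp only [Nat.add_sub_cancel]
            rw [if_pos (Nat.mod_eq_of_lt (by omega))]
            congr 2
            omega
          rw [h1]
          push_cast
          have h2 : L - 1 + 1 = L := by omega
          rw [h2]
          ring
        · intro n hn hne
          have hn' : n < L := Finset.mem_range.mp hn
          have h1 : qdig β (n+1) = dig β 1 (n+1) := by
            rw [qdig_of_simple hs]
            simp only [Nat.add_sub_cancel]
            rw [if_neg (by rw [Nat.mod_eq_of_lt hn']; omega), Nat.mod_eq_of_lt hn']
          rw [h1]; ring
        · intro h
          exact absurd (Finset.mem_range.mpr (by omega)) h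
      have hdist := Finset.sum_sub_distrib (s := Finset.range L)
        (f := fun n => (qdig β (n+1) : ℂ) * w ^ (n+1))
        (g := fun n => (dig β 1 (n+1) : ℂ) * w ^ (n+1))
      rw [hdist] at key
      have hfin : P = ∑ n ∈ Finset.range L, (dig β 1 (n+1) : ℂ) * w ^ (n+1) :=
        tsum_dig_eq_sum hβ hs
      rw [← hfin] at key
      linear_combination key
    rw [hhead] at hsplit
    have hwL : w ^ L ≠ 1 := by
      intro hcon
      have : ‖w ^ L‖ < 1 := by
        rw [norm_pow]
        calc ‖w‖ ^ L ≤ ‖w‖ ^ 1 := pow_le_pow_of_le_one (norm_nonneg _) hw.le hL1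
        _ < 1 := by simpa using hw
      rw [hcon] at this
      simp at this
    constructor
    · intro h
      rw [h] at hsplit
      linear_combination -hsplit
    · intro h
      rw [h] at hsplit
      have : Q * (1 - w ^ L) = 1 * (1 - w ^ L) := by linear_combination hsplit
      exact mul_right_cancel₀ (by intro hc; apply hwL; linear_combination -hc) this
  · constructor <;> intro h <;> rw [← h] <;> apply tsum_congr <;> intro n <;>
      rw [qdig_of_not_simple hs]

end Part7
section Part8
variable {β : ℝ}

lemma Ffun_eq (β : ℝ) (lam : ℂ) (y : ℝ) :
    Ffun β lam y = ∑' n : ℕ, (dig β y (n+1) : ℂ) * (((β:ℂ) * lam)⁻¹) ^ (n+1) := by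
  unfold Ffun
  apply tsum_congr
  intro n
  rw [div_eq_mul_inv, inv_pow]

lemma tendsto_Ffun_left (hβ : 1 < β) {lam : ℂ} (hw : ‖((β:ℂ) * lam)⁻¹‖ < 1)
    {x : ℝ} (hx0 : 0 < x) (hx1 : x ≤ 1) (hs : IsSimplePt β x) :
    Filter.Tendsto (Ffun β lam) (nhdsWithin x (Set.Ico 0 x))
      (nhds (∑' n : ℕ, (sdig β x (n+1) : ℂ) * (((β:ℂ) * lam)⁻¹) ^ (n+1))) := by
  have h := tendsto_tsum_digits hw (B := β + 1) (by linarith)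
    (fun y n => dig β y n) (sdig β x) x
    (fun y hy n => abs_dig_le' hβ hy.1 (le_trans (le_of_lt hy.2) hx1) n)
    (abs_sdig_le hβ hx0.le hx1)
    (fun N => by
      obtain ⟨δ, hδ, H⟩ := near_x_digits hβ hx0 hx1 hs N
      exact ⟨δ, hδ, fun y hy hyδ n h1 h2 => H y hy.1 hyδ hy.2 n h1 h2⟩)
  have hfe : Ffun β lam = fun y => ∑' n : ℕ, (dig β y (n+1) : ℂ) * (((β:ℂ) * lam)⁻¹) ^ (n+1) :=
    funext fun y => Ffun_eq β lam y
  rw [hfe]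
  exact h

lemma nebot_left {x : ℝ} (hx : 0 < x) : (nhdsWithin x (Set.Ico 0 x)).NeBot := by
  apply mem_closure_iff_nhdsWithin_neBot.mp
  rw [closure_Ico (ne_of_lt hx)]
  exact Set.right_mem_Icc.mpr hx.le

end Part8

theorem stmt16 (β : ℝ) (hβ : 1 < β) (lam : ℂ)
    (h1 : 1 / β < ‖lam‖) (h2 : ‖lam‖ ≤ 1) :
    (∀ x ∈ Set.Ioc (0 : ℝ) 1, IsSimplePt β x →
      Filter.Tendsto (Ffun β lam) (nhdsWithin x (Set.Ico 0 x)) (nhds (Ffun β lam x))) ↔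
    (∑' n : ℕ, (dig β 1 (n + 1) : ℂ) / ((β : ℂ) * lam) ^ (n + 1)) = 1 := by
  have hb0 : (0:ℝ) < β := by linarith
  set w : ℂ := ((β:ℂ) * lam)⁻¹ with hwdef
  have h1' : 1 < ‖(β:ℂ) * lam‖ := by
    rw [norm_mul, Complex.norm_real, Real.norm_eq_abs, abs_of_pos hb0]
    have := (div_lt_iff₀ hb0).mp h1
    linarith [this]
  have hw : ‖w‖ < 1 := by
    rw [hwdef, norm_inv]
    exact inv_lt_one_of_one_lt₀ h1'
  have hwne : w ≠ 0 := by
    apply inv_ne_zero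
    intro hc
    rw [hc, norm_zero] at h1'
    linarith
  have hRHS : (∑' n : ℕ, (dig β 1 (n + 1) : ℂ) / ((β : ℂ) * lam) ^ (n + 1))
      = ∑' n : ℕ, (dig β 1 (n + 1) : ℂ) * w ^ (n + 1) := by
    apply tsum_congr
    intro n
    rw [div_eq_mul_inv, inv_pow]
  constructor
  · intro h
    have hx0 : (0:ℝ) < 1/β := by positivity
    have hx1 : 1/β ≤ 1 := by rw [div_le_one hb0]; linarith
    have hsimple : IsSimplePt β (1/β) := by
      refine ⟨1, le_refl 1, 1, le_refl 1, ?_, ?_⟩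
      · exact Int.le_floor.mpr (by push_cast; linarith)
      · simp
    have ht1 := h (1/β) ⟨hx0, hx1⟩ hsimple
    have ht2 := tendsto_Ffun_left hβ hw hx0 hx1 hsimple
    haveI := nebot_left hx0
    have heq := tendsto_nhds_unique ht1 ht2
    rw [tsum_sdig_eq hw hβ hx0.le hx1 hsimple, Ffun_eq β lam (1/β)] at heq
    set L := Lpt β (1/β)
    set Q := ∑' n : ℕ, (qdig β (n+1) : ℂ) * w ^ (n+1) with hQdef
    have hkey : w ^ L * (Q - 1) = 0 := by linear_combination -heq
    have hQ1 : Q = 1 := by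
      rcases mul_eq_zero.mp hkey with hcon | hgood
      · exact absurd hcon (pow_ne_zero _ hwne)
      · linear_combination hgood
    rw [hRHS]
    exact (qsum_eq_one_iff hw hβ).mp hQ1
  · intro h
    have hQ1 : (∑' n : ℕ, (qdig β (n+1) : ℂ) * w ^ (n+1)) = 1 :=
      (qsum_eq_one_iff hw hβ).mpr (by rw [← hRHS]; exact h)
    intro x hx hs
    have hx0 := hx.1
    have hx1 := hx.2
    have ht2 := tendsto_Ffun_left hβ hw hx0 hx1 hs
    have hval : (∑' n : ℕ, (sdig β x (n+1) : ℂ) * w ^ (n+1)) = Ffun β lam x := by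
      rw [tsum_sdig_eq hw hβ hx0.le hx1 hs, hQ1, Ffun_eq β lam x]
      ring
    rw [hval] at ht2
    exact ht2
end

section
/- Let β > 1 be a non-integer and let (w_n)_{n≥1} be a sequence of integers with w_n ∈ {0, 1, …, ⌊β⌋} for all n. Then there exists x₀ ∈ [0,1) such that w_n = a_n(β,x₀) for all n ≥ 1 if and only if for every integer i ≥ 0 the shifted sequence (w_{i+n})_{n≥1} is strictly smaller than (d_n(β,1))_{n≥1} in the lexicographic order. -/
open scoped BigOperators

section Aux
variable {β : ℝ}

lemma tau_nonneg (x : ℝ) : 0 ≤ tau β x := Int.fract_nonneg (β * x)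

lemma tau_lt_one (x : ℝ) : tau β x < 1 := Int.fract_lt_one (β * x)

lemma iter_nonneg {x : ℝ} (hx : 0 ≤ x) (n : ℕ) : 0 ≤ (tau β)^[n] x := by
  cases n with
  | zero => simpa
  | succ n => rw [Function.iterate_succ_apply']; exact tau_nonneg _

lemma iter_le_one {x : ℝ} (hx : x ≤ 1) (n : ℕ) : (tau β)^[n] x ≤ 1 := by
  cases n with
  | zero => simpa
  | succ n => rw [Function.iterate_succ_apply']; exact (tau_lt_one _).le

lemma iter_lt_one {x : ℝ} (hx : x < 1) (n : ℕ) : (tau β)^[n] x < 1 := by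
  cases n with
  | zero => simpa
  | succ n => rw [Function.iterate_succ_apply']; exact tau_lt_one _

lemma tau_rec (x : ℝ) (i : ℕ) :
    β * (tau β)^[i] x = (dig β x (i+1) : ℝ) + (tau β)^[i+1] x := by
  rw [Function.iterate_succ_apply']
  simp only [dig, Nat.add_sub_cancel, tau]
  ring

lemma dig_bounds (hβ : 1 < β) {x : ℝ} (hx0 : 0 ≤ x) (hx : x ≤ 1) :
    ∀ n : ℕ, 1 ≤ n → 0 ≤ dig β x n ∧ dig β x n ≤ ⌊β⌋ :=
  fun n _ => ⟨dig_nonneg hβ hx0 n, dig_le_floor hβ hx0 hx n⟩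

end Aux
/-- Tail sum `Σ_{n≥1} u(i+n) β^{-n}`. -/
noncomputable def tTail (β : ℝ) (u : ℕ → ℤ) (i : ℕ) : ℝ :=
  ∑' n : ℕ, (u (i + n + 1) : ℝ) / β ^ (n + 1)

section Tail
variable {β : ℝ} {u : ℕ → ℤ}

lemma summable_tail (hβ : 1 < β) (hu : ∀ n, 1 ≤ n → 0 ≤ u n ∧ u n ≤ ⌊β⌋) (i : ℕ) :
    Summable (fun n : ℕ => (u (i + n + 1) : ℝ) / β ^ (n + 1)) := by
  have hβ0 : (0:ℝ) < β := by linarith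
  have h1 : (0:ℝ) ≤ 1/β := by positivity
  have h2 : 1/β < 1 := by rw [div_lt_one hβ0]; exact hβ
  refine Summable.of_nonneg_of_le (fun n => ?_) (fun n => ?_)
    ((summable_geometric_of_lt_one h1 h2).mul_left ((⌊β⌋ : ℤ) : ℝ))
  · have := (hu (i+n+1) (by omega)).1
    positivity
  · have hub := (hu (i+n+1) (by omega)).2
    have hC : (0:ℝ) ≤ ((⌊β⌋:ℤ):ℝ) := by
      have : (1:ℤ) ≤ ⌊β⌋ := by exact_mod_cast Int.le_floor.2 (by exact_mod_cast hβ.le)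
      exact_mod_cast this.trans' (by norm_num)
    calc (u (i+n+1) : ℝ) / β ^ (n+1) ≤ ((⌊β⌋:ℤ):ℝ) / β ^ (n+1) :=
          (div_le_div_iff_of_pos_right (by positivity)).2 (by exact_mod_cast hub)
      _ ≤ ((⌊β⌋:ℤ):ℝ) / β ^ n :=
          div_le_div_of_nonneg_left hC (by positivity)
            (pow_le_pow_right₀ (by linarith) (by omega))
      _ = ((⌊β⌋:ℤ):ℝ) * (1/β) ^ n := by rw [div_pow, one_pow]; ring

lemma tTail_nonneg (hβ : 1 < β) (hu : ∀ n, 1 ≤ n → 0 ≤ u n ∧ u n ≤ ⌊β⌋) (i : ℕ) :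
    0 ≤ tTail β u i := by
  refine tsum_nonneg fun n => ?_
  have := (hu (i+n+1) (by omega)).1
  have hβ0 : (0:ℝ) < β := by linarith
  positivity

lemma tTail_le (hβ : 1 < β) (hu : ∀ n, 1 ≤ n → 0 ≤ u n ∧ u n ≤ ⌊β⌋) (i : ℕ) :
    tTail β u i ≤ ((⌊β⌋:ℤ):ℝ) * (1 - 1/β)⁻¹ := by
  have hβ0 : (0:ℝ) < β := by linarith
  have h1 : (0:ℝ) ≤ 1/β := by positivity
  have h2 : 1/β < 1 := by rw [div_lt_one hβ0]; exact hβ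
  have hC : (0:ℝ) ≤ ((⌊β⌋:ℤ):ℝ) := by
    have : (1:ℤ) ≤ ⌊β⌋ := Int.le_floor.2 (by exact_mod_cast hβ.le)
    exact_mod_cast this.trans' (by norm_num)
  have hb : ∀ n : ℕ, (u (i + n + 1) : ℝ) / β ^ (n + 1) ≤ ((⌊β⌋:ℤ):ℝ) * (1/β) ^ n := by
    intro n
    have hub := (hu (i+n+1) (by omega)).2
    calc (u (i+n+1) : ℝ) / β ^ (n+1) ≤ ((⌊β⌋:ℤ):ℝ) / β ^ (n+1) :=
          (div_le_div_iff_of_pos_right (by positivity)).2 (by exact_mod_cast hub)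
      _ ≤ ((⌊β⌋:ℤ):ℝ) / β ^ n :=
          div_le_div_of_nonneg_left hC (by positivity)
            (pow_le_pow_right₀ (by linarith) (by omega))
      _ = ((⌊β⌋:ℤ):ℝ) * (1/β) ^ n := by rw [div_pow, one_pow]; ring
  calc tTail β u i ≤ ∑' n : ℕ, ((⌊β⌋:ℤ):ℝ) * (1/β) ^ n :=
        Summable.tsum_le_tsum hb (summable_tail hβ hu i) ((summable_geometric_of_lt_one h1 h2).mul_left _)
    _ = ((⌊β⌋:ℤ):ℝ) * (1 - 1/β)⁻¹ := by
        rw [tsum_mul_left, tsum_geometric_of_lt_one h1 h2]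

lemma tTail_rec (hβ : 1 < β) (hu : ∀ n, 1 ≤ n → 0 ≤ u n ∧ u n ≤ ⌊β⌋) (i : ℕ) :
    β * tTail β u i = (u (i+1) : ℝ) + tTail β u (i+1) := by
  have hβ0 : (0:ℝ) < β := by linarith
  have hs := summable_tail hβ hu i
  have h0 : tTail β u i
      = (u (i+0+1) : ℝ) / β ^ (0+1) + ∑' n : ℕ, (u (i+(n+1)+1) : ℝ) / β ^ ((n+1)+1) :=
    Summable.tsum_eq_zero_add hs
  have h1 : ∀ n : ℕ, (u (i+(n+1)+1) : ℝ) / β ^ ((n+1)+1)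
      = ((u ((i+1)+n+1) : ℝ) / β ^ (n+1)) * (1/β) := by
    intro n
    have : i+(n+1)+1 = (i+1)+n+1 := by omega
    rw [this, pow_succ]
    field_simp
  rw [h0]
  rw [tsum_congr h1, tsum_mul_right]
  show β * ((u (i+0+1) : ℝ) / β ^ (0+1) + tTail β u (i+1) * (1/β)) = _
  have : i + 0 + 1 = i + 1 := by omega
  rw [this]
  field_simp
  try ring

lemma tTail_split (hβ : 1 < β) (hu : ∀ n, 1 ≤ n → 0 ≤ u n ∧ u n ≤ ⌊β⌋) (i m : ℕ) :
    tTail β u i = (∑ k ∈ Finset.range m, (u (i+k+1) : ℝ) / β ^ (k+1))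
      + tTail β u (i+m) / β ^ m := by
  have hβ0 : (0:ℝ) < β := by linarith
  induction m with
  | zero => simp
  | succ m ih =>
    rw [ih, Finset.sum_range_succ]
    have hrec := tTail_rec hβ hu (i+m)
    have hT : tTail β u (i+m) = ((u (i+m+1) : ℝ) + tTail β u (i+m+1)) / β := by
      field_simp; linarith [hrec]
    rw [hT]
    have : i + (m+1) = i + m + 1 := by omega
    rw [this, pow_succ]
    field_simp
    ring

end Tail
section Uniq
variable {β : ℝ}

lemma uniq_seq (hβ : 1 < β) {c S S' : ℕ → ℝ} {M M' : ℝ}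
    (hb : ∀ i, |S i| ≤ M) (hb' : ∀ i, |S' i| ≤ M')
    (hS : ∀ i, β * S i = c i + S (i+1)) (hS' : ∀ i, β * S' i = c i + S' (i+1)) :
    ∀ i, S i = S' i := by
  intro i
  have hβ0 : (0:ℝ) < β := by linarith
  have key : ∀ j, β ^ j * (S i - S' i) = S (i+j) - S' (i+j) := by
    intro j
    induction j with
    | zero => simp
    | succ j ih =>
      have h1 := hS (i+j); have h2 := hS' (i+j)
      have h3 : β * (S (i+j) - S' (i+j)) = S (i+j+1) - S' (i+j+1) := by linarith
      calc β ^ (j+1) * (S i - S' i) = β * (β ^ j * (S i - S' i)) := by ring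
        _ = β * (S (i+j) - S' (i+j)) := by rw [ih]
        _ = S (i+(j+1)) - S' (i+(j+1)) := by
              have e : i+(j+1) = i+j+1 := rfl
              rw [e]; linarith
  have hle : ∀ j : ℕ, |S i - S' i| ≤ (M + M') * (1/β) ^ j := by
    intro j
    have hpow : (0:ℝ) < β ^ j := by positivity
    have : |S (i+j) - S' (i+j)| ≤ M + M' := by
      have := abs_sub (S (i+j)) (S' (i+j))
      calc |S (i+j) - S' (i+j)| ≤ |S (i+j)| + |S' (i+j)| := abs_sub _ _
        _ ≤ M + M' := add_le_add (hb _) (hb' _)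
    have h4 : |S i - S' i| = |S (i+j) - S' (i+j)| / β ^ j := by
      rw [← key j, abs_mul, abs_of_pos hpow]
      field_simp
    have hp : (1/β:ℝ) ^ j = (β ^ j)⁻¹ := by rw [one_div, inv_pow]
    rw [h4, div_eq_mul_inv, hp]
    exact mul_le_mul_of_nonneg_right this (by positivity)
  have hlim : Filter.Tendsto (fun j : ℕ => (M + M') * (1/β) ^ j) Filter.atTop (nhds 0) := by
    have h1 : (0:ℝ) ≤ 1/β := by positivity
    have h2 : 1/β < 1 := by rw [div_lt_one hβ0]; exact hβ
    simpa using (tendsto_pow_atTop_nhds_zero_of_lt_one h1 h2).const_mul (M + M')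
  have : |S i - S' i| ≤ 0 := ge_of_tendsto' hlim hle
  have := abs_nonneg (S i - S' i)
  have : |S i - S' i| = 0 := le_antisymm ‹_› ‹_›
  have := abs_eq_zero.1 this
  linarith

/-- KEY: the tail sums of the digits of `x` are the iterates of `τ`. -/
lemma tail_dig_eq (hβ : 1 < β) {x : ℝ} (hx0 : 0 ≤ x) (hx1 : x ≤ 1) (i : ℕ) :
    tTail β (dig β x) i = (tau β)^[i] x := by
  have hu := dig_bounds hβ hx0 hx1
  have hM : ∀ j, |tTail β (dig β x) j| ≤ ((⌊β⌋:ℤ):ℝ) * (1 - 1/β)⁻¹ := fun j =>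
    abs_le.2 ⟨by linarith [tTail_nonneg hβ hu j, tTail_le hβ hu j], tTail_le hβ hu j⟩
  exact uniq_seq hβ (c := fun j => (dig β x (j+1) : ℝ)) hM
    (fun j => abs_le.2 ⟨by linarith [iter_nonneg (β := β) hx0 j], iter_le_one hx1 j⟩)
    (tTail_rec hβ hu) (tau_rec x) i

end Uniq
section Qdig
variable {β : ℝ}

lemma simple_spec (hs : IsSimpleBeta β) :
    1 ≤ Lpt β 1 ∧ ∃ k : ℕ, 1 ≤ k ∧ (k : ℤ) ≤ ⌊β⌋ ∧
      (tau β)^[Lpt β 1 - 1] 1 = (k : ℝ) / β :=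
  Nat.sInf_mem (hs : ∃ n, n ∈ {n : ℕ | 1 ≤ n ∧ ∃ k : ℕ, 1 ≤ k ∧ (k : ℤ) ≤ ⌊β⌋ ∧
      (tau β)^[n - 1] 1 = (k : ℝ) / β})

lemma two_le_L (hβ : 1 < β) (hnonint : ∀ k : ℤ, β ≠ (k : ℝ)) (hs : IsSimpleBeta β) :
    2 ≤ Lpt β 1 := by
  obtain ⟨hL1, k, hk1, hkβ, hτ⟩ := simple_spec hs
  by_contra h
  have hL : Lpt β 1 = 1 := by omega
  rw [hL] at hτ
  simp only [Nat.sub_self, Function.iterate_zero, id_eq] at hτ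
  have hβ0 : (0:ℝ) < β := by linarith
  have : β = (k : ℝ) := by field_simp at hτ; linarith
  exact hnonint (k : ℤ) (by exact_mod_cast this)

lemma dig_one_one (hβ : 1 < β) : dig β 1 1 = ⌊β⌋ := by
  simp [dig]

lemma qdig_bounds (hβ : 1 < β) (hnonint : ∀ k : ℤ, β ≠ (k : ℝ)) :
    ∀ n, 1 ≤ n → 0 ≤ qdig β n ∧ qdig β n ≤ ⌊β⌋ := by
  intro n hn
  have hd := dig_bounds hβ (by norm_num : (0:ℝ) ≤ 1) le_rfl
  unfold qdig
  split_ifs with hs h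
  · obtain ⟨hL1, k, hk1, hkβ, hτ⟩ := simple_spec hs
    have hβ0 : (0:ℝ) < β := by linarith
    have hdigL : dig β 1 (Lpt β 1) = (k : ℤ) := by
      unfold dig
      rw [hτ]
      rw [mul_div_cancel₀ _ (ne_of_gt hβ0)]
      exact_mod_cast Int.floor_intCast (k : ℤ)
    rw [hdigL]
    constructor
    · omega
    · omega
  · exact hd _ (by omega)
  · exact hd _ (by omega)

lemma simple_of_iter_zero (hβ : 1 < β) : ∀ m : ℕ, (tau β)^[m] 1 = 0 → IsSimpleBeta β := by
  intro m
  induction m with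
  | zero => intro h; norm_num at h
  | succ m ih =>
    intro h
    rw [Function.iterate_succ_apply'] at h
    set y := (tau β)^[m] 1 with hy
    have hβ0 : (0:ℝ) < β := by linarith
    have hy0 : 0 ≤ y := iter_nonneg (by norm_num) m
    have hy1 : y ≤ 1 := iter_le_one le_rfl m
    have hfl : β * y = (⌊β * y⌋ : ℝ) := by
      have : tau β y = 0 := h
      unfold tau at this; linarith
    have hK0 : 0 ≤ ⌊β * y⌋ := Int.floor_nonneg.2 (mul_nonneg hβ0.le hy0)
    rcases eq_or_lt_of_le hK0 with hK | hK
    · have : β * y = 0 := by rw [hfl, ← hK]; norm_num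
      have : y = 0 := by
        rcases mul_eq_zero.1 this with h' | h'
        · linarith
        · exact h'
      exact ih this
    · refine ⟨m+1, by omega, (⌊β * y⌋).toNat, by omega, ?_, ?_⟩
      · rw [Int.toNat_of_nonneg hK0]
        exact Int.floor_le_floor (by nlinarith)
      · have : ((⌊β * y⌋).toNat : ℝ) = (⌊β * y⌋ : ℝ) := by
          exact_mod_cast Int.toNat_of_nonneg hK0
        rw [Nat.add_sub_cancel, this]
        rw [← hfl]
        field_simp
        exact hy.symm

end Qdig
section QdigTail
variable {β : ℝ}

lemma tail_qdig_simple (hβ : 1 < β) (hnonint : ∀ k : ℤ, β ≠ (k:ℝ)) (hs : IsSimpleBeta β)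
    (i : ℕ) : tTail β (qdig β) i = (tau β)^[i % Lpt β 1] 1 := by
  obtain ⟨hL1, k, hk1, hkβ, hτ⟩ := simple_spec hs
  have hL2 := two_le_L hβ hnonint hs
  set L := Lpt β 1 with hLdef
  have hβ0 : (0:ℝ) < β := by linarith
  have hq := qdig_bounds hβ hnonint
  have hdigL : dig β 1 L = (k : ℤ) := by
    unfold dig; rw [hτ, mul_div_cancel₀ _ (ne_of_gt hβ0)]
    exact_mod_cast Int.floor_intCast (k:ℤ)
  have hM : ∀ j, |tTail β (qdig β) j| ≤ ((⌊β⌋:ℤ):ℝ) * (1-1/β)⁻¹ := fun j =>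
    abs_le.2 ⟨by linarith [tTail_nonneg hβ hq j, tTail_le hβ hq j], tTail_le hβ hq j⟩
  have hb' : ∀ j, |(tau β)^[j % L] 1| ≤ 1 := fun j =>
    abs_le.2 ⟨by linarith [iter_nonneg (β:=β) (by norm_num : (0:ℝ) ≤ 1) (j % L)],
      iter_le_one le_rfl _⟩
  refine uniq_seq hβ (c := fun j => (qdig β (j+1) : ℝ)) hM hb' (tTail_rec hβ hq) ?_ i
  intro j
  show β * (tau β)^[j % L] 1 = (qdig β (j+1) : ℝ) + (tau β)^[(j+1) % L] 1
  have hqd : qdig β (j+1) = if j % L = L - 1 then dig β 1 L - 1 else dig β 1 (j % L + 1) := by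
    unfold qdig
    rw [if_pos hs]
    simp only [Nat.add_sub_cancel, ← hLdef]
  have hmodsucc : (j+1) % L = (j % L + 1) % L := by
    conv_lhs => rw [Nat.add_mod]
    rw [Nat.mod_eq_of_lt (show 1 < L by omega)]
  have hrlt : j % L < L := Nat.mod_lt _ (by omega)
  rcases eq_or_ne (j % L) (L-1) with hr | hr
  · rw [hqd, if_pos hr, hdigL, hr]
    have h1 : (j+1) % L = 0 := by
      rw [hmodsucc, hr, Nat.sub_add_cancel (by omega), Nat.mod_self]
    rw [h1]
    simp only [Function.iterate_zero, id_eq]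
    rw [hτ]
    rw [mul_div_cancel₀ _ (ne_of_gt hβ0)]
    push_cast
    ring
  · rw [hqd, if_neg hr]
    have h1 : (j+1) % L = j % L + 1 := by
      rw [hmodsucc]
      exact Nat.mod_eq_of_lt (by omega)
    rw [h1]
    exact tau_rec 1 (j % L)

lemma tail_qdig_nonsimple (hβ : 1 < β) (hnonint : ∀ k : ℤ, β ≠ (k:ℝ))
    (hs : ¬ IsSimpleBeta β) (i : ℕ) :
    tTail β (qdig β) i = (tau β)^[i] 1 := by
  have he : tTail β (qdig β) i = tTail β (dig β 1) i := by
    unfold tTail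
    refine tsum_congr fun n => ?_
    have : qdig β (i+n+1) = dig β 1 (i+n+1) := by unfold qdig; rw [if_neg hs]
    rw [this]
  rw [he, tail_dig_eq hβ (by norm_num) le_rfl]

lemma tTail_qdig_le_one (hβ : 1 < β) (hnonint : ∀ k : ℤ, β ≠ (k:ℝ)) (i : ℕ) :
    tTail β (qdig β) i ≤ 1 := by
  by_cases hs : IsSimpleBeta β
  · rw [tail_qdig_simple hβ hnonint hs i]; exact iter_le_one le_rfl _
  · rw [tail_qdig_nonsimple hβ hnonint hs i]; exact iter_le_one le_rfl _

lemma tTail_qdig_zero (hβ : 1 < β) (hnonint : ∀ k : ℤ, β ≠ (k:ℝ)) :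
    tTail β (qdig β) 0 = 1 := by
  by_cases hs : IsSimpleBeta β
  · rw [tail_qdig_simple hβ hnonint hs 0, Nat.zero_mod]; simp
  · rw [tail_qdig_nonsimple hβ hnonint hs 0]; simp

lemma qdig_pos_exists (hβ : 1 < β) (hnonint : ∀ k : ℤ, β ≠ (k:ℝ)) (m : ℕ) :
    ∃ n : ℕ, 1 ≤ qdig β (m + n + 1) := by
  by_cases hs : IsSimpleBeta β
  · obtain ⟨hL1, k, hk1, hkβ, hτ⟩ := simple_spec hs
    have hL2 := two_le_L hβ hnonint hs
    set L := Lpt β 1 with hLdef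
    refine ⟨m * L - m, ?_⟩
    have hidx : m + (m * L - m) + 1 = m * L + 1 := by
      have : m ≤ m * L := Nat.le_mul_of_pos_right m (by omega)
      omega
    rw [hidx]
    have hq : qdig β (m * L + 1) = dig β 1 1 := by
      unfold qdig
      rw [if_pos hs]
      simp only [Nat.add_sub_cancel, ← hLdef]
      rw [Nat.mul_mod_left]
      rw [if_neg (by omega)]
    rw [hq, dig_one_one hβ]
    exact Int.le_floor.2 (by exact_mod_cast hβ.le)
  · by_contra hc
    push_neg at hc
    have hq := qdig_bounds hβ hnonint
    have hz : ∀ n : ℕ, qdig β (m + n + 1) = 0 := by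
      intro n
      have h1 := (hq (m+n+1) (by omega)).1
      have h2 := hc n
      omega
    have hT0 : tTail β (qdig β) m = 0 := by
      unfold tTail
      have : ∀ n : ℕ, (qdig β (m + n + 1) : ℝ) / β ^ (n+1) = 0 := by
        intro n; rw [hz n]; simp
      rw [tsum_congr this, tsum_zero]
    rw [tail_qdig_nonsimple hβ hnonint hs m] at hT0
    exact hs (simple_of_iter_zero hβ m hT0)

lemma tTail_qdig_pos (hβ : 1 < β) (hnonint : ∀ k : ℤ, β ≠ (k:ℝ)) (m : ℕ) :
    0 < tTail β (qdig β) m := by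
  obtain ⟨n, hn⟩ := qdig_pos_exists hβ hnonint m
  have hβ0 : (0:ℝ) < β := by linarith
  have hq := qdig_bounds hβ hnonint
  have hterm : (0:ℝ) < (qdig β (m + n + 1) : ℝ) / β ^ (n+1) := by
    have : (1:ℝ) ≤ (qdig β (m + n + 1) : ℝ) := by exact_mod_cast hn
    positivity
  refine lt_of_lt_of_le hterm ?_
  refine Summable.le_tsum (summable_tail hβ hq m) n fun j _ => ?_
  have := (hq (m+j+1) (by omega)).1
  positivity
end QdigTail
section Main
variable {β : ℝ}

lemma forward_dir (hβ : 1 < β) (hnonint : ∀ k : ℤ, β ≠ (k:ℝ)) {x₀ : ℝ}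
    (hx0 : 0 ≤ x₀) (hx1 : x₀ < 1) (i : ℕ) :
    ∃ m : ℕ, 1 ≤ m ∧ (∀ n, 1 ≤ n → n < m → dig β x₀ (i+n) = qdig β n) ∧
      dig β x₀ (i+m) < qdig β m := by
  classical
  have hβ0 : (0:ℝ) < β := by linarith
  have hTa : ∀ j, tTail β (dig β x₀) j = (tau β)^[j] x₀ := tail_dig_eq hβ hx0 hx1.le
  have ha := dig_bounds hβ hx0 hx1.le
  have hq := qdig_bounds hβ hnonint
  by_cases hall : ∀ j : ℕ, dig β x₀ (i+j+1) = qdig β (j+1)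
  · exfalso
    have h1 : tTail β (dig β x₀) i = tTail β (qdig β) 0 := by
      unfold tTail
      refine tsum_congr fun n => ?_
      rw [hall n, Nat.zero_add]
    have h2 : (tau β)^[i] x₀ < 1 := iter_lt_one hx1 i
    rw [hTa i, tTail_qdig_zero hβ hnonint] at h1
    linarith
  · push_neg at hall
    set j₀ := Nat.find hall with hj₀def
    have hj₀ : dig β x₀ (i+j₀+1) ≠ qdig β (j₀+1) := Nat.find_spec hall
    have hmin : ∀ j, j < j₀ → dig β x₀ (i+j+1) = qdig β (j+1) := fun j hj =>
      not_not.1 (Nat.find_min hall hj)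
    refine ⟨j₀+1, by omega, ?_, ?_⟩
    · intro n hn1 hnm
      have h1 : n - 1 < j₀ := by omega
      have h2 := hmin (n-1) h1
      have he : i + (n-1) + 1 = i + n := by omega
      have he2 : (n-1) + 1 = n := by omega
      rwa [he, he2] at h2
    · by_contra hge
      push_neg at hge
      have hge' : qdig β (j₀+1) + 1 ≤ dig β x₀ (i+j₀+1) := by
        have h3 : i + (j₀+1) = i + j₀ + 1 := rfl
        rw [h3] at hge
        omega
      set m := j₀ + 1 with hm
      have hpow : (0:ℝ) < β ^ m := by positivity
      have splitA := tTail_split hβ ha i m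
      have splitD := tTail_split hβ hq 0 m
      simp only [Nat.zero_add] at splitD
      rw [tTail_qdig_zero hβ hnonint] at splitD
      have hsum : (∑ k ∈ Finset.range m, (qdig β (k+1) : ℝ)/β^(k+1)) + 1/β^m
          ≤ ∑ k ∈ Finset.range m, (dig β x₀ (i+k+1) : ℝ)/β^(k+1) := by
        rw [hm, Finset.sum_range_succ, Finset.sum_range_succ]
        have heq : ∀ k ∈ Finset.range j₀,
            (qdig β (k+1):ℝ)/β^(k+1) = (dig β x₀ (i+k+1):ℝ)/β^(k+1) := by
          intro k hk
          rw [Finset.mem_range] at hk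
          rw [hmin k hk]
        rw [Finset.sum_congr rfl heq]
        have hlast : (qdig β (j₀+1):ℝ)/β^(j₀+1) + 1/β^(j₀+1)
            ≤ (dig β x₀ (i+j₀+1):ℝ)/β^(j₀+1) := by
          rw [← add_div]
          gcongr
          exact_mod_cast hge'
        linarith
      have hDm : tTail β (qdig β) m ≤ 1 := tTail_qdig_le_one hβ hnonint _
      have hAm : 0 ≤ tTail β (dig β x₀) (i+m) := tTail_nonneg hβ ha _
      have hx : (tau β)^[i] x₀ < 1 := iter_lt_one hx1 i
      rw [← hTa i, splitA] at hx
      have e1 : tTail β (qdig β) m / β^m ≤ 1/β^m := by gcongr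
      have e2 : 0 ≤ tTail β (dig β x₀) (i+m) / β^m := div_nonneg hAm hpow.le
      linarith

lemma backward_dir (hβ : 1 < β) (hnonint : ∀ k : ℤ, β ≠ (k:ℝ)) {w : ℕ → ℤ}
    (hw : ∀ n : ℕ, 1 ≤ n → 0 ≤ w n ∧ w n ≤ ⌊β⌋)
    (H : ∀ i : ℕ, ∃ m : ℕ, 1 ≤ m ∧
      (∀ n : ℕ, 1 ≤ n → n < m → w (i + n) = qdig β n) ∧ w (i + m) < qdig β m) :
    ∃ x₀ : ℝ, 0 ≤ x₀ ∧ x₀ < 1 ∧ ∀ n : ℕ, 1 ≤ n → w n = dig β x₀ n := by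
  have hβ0 : (0:ℝ) < β := by linarith
  have hq := qdig_bounds hβ hnonint
  have hr0 : ∀ i, 0 ≤ tTail β w i := tTail_nonneg hβ hw
  have hrM : ∀ i, tTail β w i ≤ ((⌊β⌋:ℤ):ℝ)*(1-1/β)⁻¹ := tTail_le hβ hw
  have hbdd : BddAbove (Set.range (tTail β w)) :=
    ⟨((⌊β⌋:ℤ):ℝ)*(1-1/β)⁻¹, Set.forall_mem_range.2 hrM⟩
  have hrS : ∀ i, tTail β w i ≤ ⨆ j, tTail β w j := fun i => le_ciSup hbdd i
  have est : ∀ i m, 1 ≤ m → (∀ n, 1 ≤ n → n < m → w (i+n) = qdig β n) →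
      w (i+m) < qdig β m →
      tTail β w i ≤ 1 - tTail β (qdig β) m / β^m + (tTail β w (i+m) - 1)/β^m := by
    intro i m hm hagree hlt
    obtain ⟨j, rfl⟩ : ∃ j, m = j + 1 := ⟨m-1, by omega⟩
    have hpow : (0:ℝ) < β ^ (j+1) := by positivity
    have splitW := tTail_split hβ hw i (j+1)
    have splitD := tTail_split hβ hq 0 (j+1)
    simp only [Nat.zero_add] at splitD
    rw [tTail_qdig_zero hβ hnonint] at splitD
    have hlt' : (w (i+j+1) : ℝ) ≤ (qdig β (j+1) : ℝ) - 1 := by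
      have h3 : i + (j+1) = i + j + 1 := rfl
      rw [h3] at hlt
      have : w (i+j+1) ≤ qdig β (j+1) - 1 := by omega
      exact_mod_cast this
    have hsum : ∑ k ∈ Finset.range (j+1), (w (i+k+1):ℝ)/β^(k+1)
        ≤ (∑ k ∈ Finset.range (j+1), (qdig β (k+1):ℝ)/β^(k+1)) - 1/β^(j+1) := by
      rw [Finset.sum_range_succ, Finset.sum_range_succ]
      have heq : ∀ k ∈ Finset.range j,
          (w (i+k+1):ℝ)/β^(k+1) = (qdig β (k+1):ℝ)/β^(k+1) := by
        intro k hk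
        rw [Finset.mem_range] at hk
        rw [show i+k+1 = i+(k+1) from rfl, hagree (k+1) (by omega) (by omega)]
      rw [Finset.sum_congr rfl heq]
      have hlast : (w (i+j+1):ℝ)/β^(j+1) ≤ (qdig β (j+1):ℝ)/β^(j+1) - 1/β^(j+1) := by
        rw [div_sub_div_same]
        gcongr
      linarith
    have e3 : (tTail β w (i+(j+1)) - 1)/β^(j+1)
        = tTail β w (i+(j+1))/β^(j+1) - 1/β^(j+1) := by ring
    linarith
  have hS1 : (⨆ j, tTail β w j) ≤ 1 := by
    by_contra hc
    push_neg at hc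
    have hub : ∀ i, tTail β w i ≤ 1 + ((⨆ j, tTail β w j) - 1)/β := by
      intro i
      obtain ⟨m, hm, hagree, hlt⟩ := H i
      have h1 := est i m hm hagree hlt
      have h2 : 0 ≤ tTail β (qdig β) m := tTail_nonneg hβ hq m
      have hpow : (0:ℝ) < β ^ m := by positivity
      have h3 : ((⨆ j, tTail β w j) - 1)/β^m ≤ ((⨆ j, tTail β w j) - 1)/β := by
        apply div_le_div_of_nonneg_left (by linarith) hβ0
        calc β = β ^ 1 := (pow_one β).symm
          _ ≤ β ^ m := pow_le_pow_right₀ hβ.le hm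
      have h4 : (tTail β w (i+m) - 1)/β^m ≤ ((⨆ j, tTail β w j) - 1)/β^m := by
        gcongr
        exact hrS (i+m)
      have h5 : 0 ≤ tTail β (qdig β) m / β^m := div_nonneg h2 hpow.le
      linarith
    have h6 : (⨆ j, tTail β w j) ≤ 1 + ((⨆ j, tTail β w j) - 1)/β := ciSup_le hub
    have h7 : ((⨆ j, tTail β w j) - 1)/β < (⨆ j, tTail β w j) - 1 :=
      div_lt_self (by linarith) hβ
    linarith
  have hrlt : ∀ i, tTail β w i < 1 := by
    intro i
    obtain ⟨m, hm, hagree, hlt⟩ := H i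
    have h1 := est i m hm hagree hlt
    have hpow : (0:ℝ) < β ^ m := by positivity
    have h2 : 0 < tTail β (qdig β) m := tTail_qdig_pos hβ hnonint m
    have h3 : (tTail β w (i+m) - 1)/β^m ≤ 0 :=
      div_nonpos_of_nonpos_of_nonneg (by linarith [hrS (i+m)]) hpow.le
    have h4 : 0 < tTail β (qdig β) m / β^m := div_pos h2 hpow
    linarith
  have hfloor : ∀ i, ⌊β * tTail β w i⌋ = w (i+1) := by
    intro i
    have hrec : β * tTail β w i = (w (i+1):ℝ) + tTail β w (i+1) := tTail_rec hβ hw i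
    rw [hrec, add_comm, Int.floor_add_intCast]
    have h0 : ⌊tTail β w (i+1)⌋ = 0 := by
      rw [Int.floor_eq_zero_iff]
      exact ⟨hr0 _, hrlt _⟩
    omega
  have hiter : ∀ i, (tau β)^[i] (tTail β w 0) = tTail β w i := by
    intro i
    induction i with
    | zero => rfl
    | succ i ih =>
      rw [Function.iterate_succ_apply', ih]
      show tau β (tTail β w i) = tTail β w (i+1)
      unfold tau
      rw [hfloor i]
      linarith [tTail_rec hβ hw i]
  refine ⟨tTail β w 0, hr0 0, hrlt 0, ?_⟩
  intro n hn
  obtain ⟨i, rfl⟩ : ∃ i, n = i + 1 := ⟨n-1, by omega⟩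
  have hd : dig β (tTail β w 0) (i+1) = ⌊β * (tau β)^[i] (tTail β w 0)⌋ := by
    unfold dig
    rw [Nat.add_sub_cancel]
  rw [hd, hiter i, hfloor i]

end Main
theorem stmt19 (β : ℝ) (hβ : 1 < β) (hnonint : ∀ k : ℤ, β ≠ (k : ℝ))
    (w : ℕ → ℤ) (hw : ∀ n : ℕ, 1 ≤ n → 0 ≤ w n ∧ w n ≤ ⌊β⌋) :
    (∃ x₀ : ℝ, 0 ≤ x₀ ∧ x₀ < 1 ∧ ∀ n : ℕ, 1 ≤ n → w n = dig β x₀ n) ↔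
    (∀ i : ℕ, ∃ m : ℕ, 1 ≤ m ∧
      (∀ n : ℕ, 1 ≤ n → n < m → w (i + n) = qdig β n) ∧ w (i + m) < qdig β m) := by
  constructor
  · rintro ⟨x₀, hx0, hx1, hwd⟩ i
    obtain ⟨m, hm, hagree, hlt⟩ := forward_dir hβ hnonint hx0 hx1 i
    refine ⟨m, hm, fun n hn1 hnm => ?_, ?_⟩
    · rw [hwd (i+n) (by omega)]
      exact hagree n hn1 hnm
    · rw [hwd (i+m) (by omega)]
      exact hlt
  · intro H
    exact backward_dir hβ hnonint hw H
end
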